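/- For three alternatives and agents all having the same quantile parameter h with 2/3 ≤ h ≤ 1, under the uniform lottery (each alternative with probability 1/3) every agent's h-quantile representative is her top-ranked alternative; hence the constant uniform-lottery rule is efficient and strategyproof. -/

import Mathlib

open scoped Classical
open Finset

/-- Total probability mass of options strictly worse than `o` under strict preference `p`
(`p u v` means `u` is strictly preferred to `v`). -/
noncomputable def sWorse {O : Type*} [Fintype O] (x : O → ℝ) (p : O → O → Prop) (o : O) : ℝ :=
  ∑ o' ∈ univ.filter (fun o' => p o o'), x o'

/-- Total probability mass of options weakly worse than `o`. -/
noncomputable def wWorse {O : Type*} [Fintype O] (x : O → ℝ) (p : O → O → Prop) (o : O) : ℝ :=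
  ∑ o' ∈ univ.filter (fun o' => p o o' ∨ o' = o), x o'

/-- `x` is a lottery (probability distribution) over the finite set of options. -/
def IsLottery {O : Type*} [Fintype O] (x : O → ℝ) : Prop :=
  (∀ o, 0 ≤ x o) ∧ ∑ o, x o = 1

/-- `o` is the `h`-quantile representative of lottery `x` with respect to strict preference `p`:
for `h = 1` it is the most preferred option with positive probability; for `h < 1` it is the
option whose strictly-worse mass is at most `h` while its weakly-worse mass exceeds `h`. -/
def IsRep {O : Type*} [Fintype O] (x : O → ℝ) (p : O → O → Prop) (h : ℝ) (o : O) : Prop :=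
  (h = 1 ∧ 0 < x o ∧ ∀ o', p o' o → x o' = 0) ∨
  (h < 1 ∧ sWorse x p o ≤ h ∧ h < wWorse x p o)

/-- A lottery `y` dominates `x` for the profile `pref` and quantile vector `h`. -/
def Dominates {N O : Type*} [Fintype O] (pref : N → O → O → Prop) (h : N → ℝ)
    (y x : O → ℝ) : Prop :=
  (∀ i u v, IsRep y (pref i) (h i) u → IsRep x (pref i) (h i) v → (pref i u v ∨ u = v)) ∧
  (∃ i u v, IsRep y (pref i) (h i) u ∧ IsRep x (pref i) (h i) v ∧ pref i u v)

/-- For three alternatives and common quantile parameter `h ∈ [2/3, 1]`, under the uniform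
lottery every agent's `h`-quantile representative is her top-ranked alternative; hence the
constant uniform-lottery rule is efficient (and trivially strategyproof, since any truthful
representative is weakly preferred to any representative after a misreport). -/
lemma uniform_rep_top {A : Type*} [Fintype A] (hA : Fintype.card A = 3)
    (p : A → A → Prop) (hp : IsStrictTotalOrder A p) (h : ℝ) (h1 : 2/3 ≤ h)
    {o : A} (ho : IsRep (fun _ => (1/3:ℝ)) p h o) : ∀ o', o' ≠ o → p o o' := by
  have hasymm : ∀ a b, p a b → p b a → False := fun a b hab hba =>
    hp.irrefl a (hp.trans _ _ _ hab hba)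
  intro o' hne
  rcases ho with ⟨_, _, htop⟩ | ⟨hlt, _, hw⟩
  · rcases (if ha : p o o' then Or.inl ha else if hb : p o' o then Or.inr (Or.inr hb) else Or.inr (Or.inl (hp.trichotomous o o' ha hb)) : p o o' ∨ o = o' ∨ p o' o) with hpo | heq | hpo
    · exact hpo
    · exact absurd heq.symm hne
    · exact absurd (htop o' hpo) (by norm_num)
  · have huniv : (univ.filter (fun o' => p o o' ∨ o' = o)) = univ := by
      apply Finset.eq_univ_of_card
      have hc3 : (univ.filter (fun o' => p o o' ∨ o' = o)).card ≤ 3 := by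
        rw [← hA, ← Finset.card_univ]
        exact Finset.card_filter_le _ _
      have hm : (2:ℝ)/3 < ((univ.filter (fun o' => p o o' ∨ o' = o)).card : ℝ) * (1/3) := by
        have := lt_of_le_of_lt h1 hw
        simpa [wWorse, Finset.sum_const, nsmul_eq_mul] using this
      have h2 : (2:ℝ) < ((univ.filter (fun o' => p o o' ∨ o' = o)).card : ℝ) := by linarith
      have : 2 < (univ.filter (fun o' => p o o' ∨ o' = o)).card := by exact_mod_cast h2
      omega
    have : o' ∈ univ.filter (fun o' => p o o' ∨ o' = o) := by rw [huniv]; exact Finset.mem_univ o'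
    rcases (Finset.mem_filter.mp this).2 with hpo | heq
    · exact hpo
    · exact absurd heq hne

theorem stmt8 {N A : Type*} [Fintype N] [Fintype A] (hA : Fintype.card A = 3)
    (pref : N → A → A → Prop) (hp : ∀ i, IsStrictTotalOrder A (pref i))
    (h : ℝ) (h1 : 2/3 ≤ h) (h2 : h ≤ 1) :
    (∀ i t, (∀ o, o ≠ t → pref i t o) → IsRep (fun _ => (1/3 : ℝ)) (pref i) h t) ∧
    (¬ ∃ y : A → ℝ, IsLottery y ∧ Dominates pref (fun _ => h) y (fun _ => (1/3 : ℝ))) ∧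
    (∀ i u v, IsRep (fun _ => (1/3 : ℝ)) (pref i) h u →
      IsRep (fun _ => (1/3 : ℝ)) (pref i) h v → (pref i u v ∨ u = v)) := by
  have hA3 : (3:ℕ) ≠ 0 := by norm_num
  have htop_rep : ∀ i t, (∀ o, o ≠ t → pref i t o) →
      IsRep (fun _ => (1/3 : ℝ)) (pref i) h t := by
    intro i t ht
    have hasymm : ∀ a b, pref i a b → pref i b a → False := fun a b hab hba =>
      (hp i).irrefl a ((hp i).trans _ _ _ hab hba)
    rcases eq_or_lt_of_le h2 with h2e | h2l
    · left
      refine ⟨h2e, by norm_num, fun o' ho' => ?_⟩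
      by_cases heq : o' = t
      · exact absurd (heq ▸ ho') ((hp i).irrefl t)
      · exact absurd ho' (fun hh => hasymm _ _ (ht o' heq) hh)
    · right
      refine ⟨h2l, ?_, ?_⟩
      · have hfs : univ.filter (fun o' => pref i t o') = univ.filter (fun o' => o' ≠ t) := by
          ext o'
          simp only [Finset.mem_filter, Finset.mem_univ, true_and]
          constructor
          · intro hpo heq; exact (hp i).irrefl t (heq ▸ hpo)
          · exact ht o'
        have hcard : (univ.filter (fun o' => o' ≠ t)).card = 2 := by
          rw [Finset.filter_ne', Finset.card_erase_of_mem (Finset.mem_univ t),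
            Finset.card_univ, hA]
        rw [sWorse, hfs, Finset.sum_const, hcard]
        norm_num
        linarith
      · have hfs : univ.filter (fun o' => pref i t o' ∨ o' = t) = univ := by
          apply Finset.filter_true_of_mem
          intro o' _
          by_cases heq : o' = t
          · exact Or.inr heq
          · exact Or.inl (ht o' heq)
        rw [wWorse, hfs, Finset.sum_const, Finset.card_univ, hA]
        norm_num
        linarith
  refine ⟨htop_rep, ?_, ?_⟩
  · rintro ⟨y, -, -, i, u, v, hu, hv, hpuv⟩
    have hvtop := uniform_rep_top hA (pref i) (hp i) h h1 hv
    have hasymm : ∀ a b, pref i a b → pref i b a → False := fun a b hab hba =>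
      (hp i).irrefl a ((hp i).trans _ _ _ hab hba)
    by_cases heq : u = v
    · exact (hp i).irrefl v (heq ▸ hpuv)
    · exact hasymm _ _ hpuv (hvtop u heq)
  · intro i u v hu hv
    right
    by_contra hne
    have hut := uniform_rep_top hA (pref i) (hp i) h h1 hu
    have hvt := uniform_rep_top hA (pref i) (hp i) h h1 hv
    exact (hp i).irrefl u ((hp i).trans _ _ _ (hut v (Ne.symm hne)) (hvt u hne))
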